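/- Let p be a prime, B a group, and A a normal subgroup of B isomorphic to ℤ². Then for every k ≥ 1, the image of the homomorphism B → Aut(A/Γ^kA) induced by the conjugation action of B on A is a finite p-group. -/

import Mathlib

/-- The subgroup of `m`-th powers (written additively: `m`-th multiples) of elements of `A`. -/
def powSubgroup {B : Type*} [Group B] (A : Subgroup B) (m : ℕ) : Subgroup B :=
  Subgroup.closure {x : B | ∃ a ∈ A, x = a ^ m}

/-- `gammaSeries p A k` is the subgroup `Γ^{k+1}A` of the paper: `Γ¹A = [B,A]·(pA)` and
`Γ^{k+1}A = [B,Γ^kA]·(p^{k+1}A)`. (Indices are shifted: `gammaSeries p A k = Γ^{k+1}A`.) -/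
def gammaSeries {B : Type*} [Group B] (p : ℕ) (A : Subgroup B) : ℕ → Subgroup B
  | 0 => ⁅(⊤ : Subgroup B), A⁆ ⊔ powSubgroup A p
  | k + 1 => ⁅(⊤ : Subgroup B), gammaSeries p A k⁆ ⊔ powSubgroup A (p ^ (k + 2))

/- ### Auxiliary material -/

lemma stmt8.dvd_aux {p : ℕ} (hp : p.Prime) (k j : ℕ) (hj1 : j ≠ 0) (hjk : j ≤ k) :
    p ^ (k + 1) ∣ (p ^ (2 * k + 1)).choose j := by
  have hkN : j ≤ p ^ (2 * k + 1) :=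
    le_trans (hjk.trans (by omega)) (Nat.le_of_lt (Nat.lt_pow_self (n := 2 * k + 1) hp.one_lt))
  have hm := hp.emultiplicity_choose_prime_pow hkN hj1
  apply pow_dvd_of_le_emultiplicity
  rw [hm]
  norm_cast
  have hdvd : p ^ (multiplicity p j) ∣ j := pow_multiplicity_dvd p j
  have h1 : p ^ (multiplicity p j) ≤ j := Nat.le_of_dvd (Nat.pos_of_ne_zero hj1) hdvd
  have h2 : multiplicity p j < p ^ multiplicity p j := Nat.lt_pow_self hp.one_lt
  omega

lemma stmt8.end_sum_apply {ι M : Type*} [AddCommMonoid M] (s : Finset ι)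
    (f : ι → AddMonoid.End M) (y : M) : (∑ i ∈ s, f i) y = ∑ i ∈ s, f i y := by
  classical
  induction s using Finset.cons_induction with
  | empty => rfl
  | cons a s ha ih => rw [Finset.sum_cons, Finset.sum_cons, ← ih]; rfl

section aux

variable {B : Type*} [Group B] (p : ℕ) (A : Subgroup B)

lemma powSubgroup_le (m : ℕ) : powSubgroup A m ≤ A := by
  rw [powSubgroup, Subgroup.closure_le]
  rintro x ⟨a, ha, rfl⟩
  exact pow_mem ha m

lemma gammaSeries_le (hA : A.Normal) : ∀ k, gammaSeries p A k ≤ A := by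
  intro k
  induction k with
  | zero => exact sup_le (Subgroup.commutator_le_right _ _) (powSubgroup_le A p)
  | succ k ih =>
    exact sup_le (le_trans (Subgroup.commutator_mono le_rfl ih)
      (Subgroup.commutator_le_right _ _)) (powSubgroup_le A _)

lemma powSubgroup_pow_le (k : ℕ) : powSubgroup A (p ^ (k + 1)) ≤ gammaSeries p A k := by
  cases k with
  | zero => simpa [gammaSeries, pow_one] using le_sup_right
  | succ k => exact le_sup_right

/-- The chain `A = Γ⁰ ≥ Γ¹ ≥ ⋯` (with `gchain p A (i+1) = gammaSeries p A i`). -/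
def gchain : ℕ → Subgroup B
  | 0 => A
  | i + 1 => gammaSeries p A i

lemma gchain_le (hA : A.Normal) : ∀ i, gchain p A i ≤ A
  | 0 => le_rfl
  | i + 1 => gammaSeries_le p A hA i

lemma commutator_gchain_le : ∀ i, ⁅(⊤ : Subgroup B), gchain p A i⁆ ≤ gchain p A (i + 1)
  | 0 => le_sup_left
  | i + 1 => le_sup_left

end aux

open scoped commutatorElement

/-- Let `p` be a prime, `B` a group, and `A` a normal subgroup of `B`
isomorphic to `ℤ²`.  Then for every `k ≥ 1` the image of the homomorphism
`B →* Aut(A/Γ^kA)` induced by the conjugation action of `B` on `A` is a finite `p`-group.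
(Here `θ` ranges over the homomorphisms `B →* Aut(A/Γ^kA)` induced by conjugation;
`Γ^kA` is viewed as a subgroup of `A`, which is legitimate since `Γ^kA ≤ A`;
the hypothesis that it is normal in `A` is automatic since `A` is abelian.) -/
theorem stmt_8 (p : ℕ) (hp : p.Prime) (B : Type*) [Group B] (A : Subgroup B)
    (hA : A.Normal) (e : A ≃* Multiplicative (ℤ × ℤ)) (k : ℕ)
    (hnorm : ((gammaSeries p A k).subgroupOf A).Normal)
    (θ : B →* MulAut (A ⧸ (gammaSeries p A k).subgroupOf A))
    (hθ : ∀ (b : B) (a : A), θ b (QuotientGroup.mk a) =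
      QuotientGroup.mk (⟨b * ↑a * b⁻¹, hA.conj_mem ↑a a.2 b⟩ : A)) :
    Finite θ.range ∧ IsPGroup p θ.range := by
  classical
  haveI := hA
  haveI := hnorm
  set Γ : Subgroup A := (gammaSeries p A k).subgroupOf A with hΓdef
  -- `Q` is the quotient
  set Q := A ⧸ Γ with hQdef
  -- `A` and hence `Q` are commutative
  have hAcomm : ∀ x y : A, x * y = y * x := fun x y =>
    e.injective (by rw [map_mul, map_mul, mul_comm])
  have hQcomm : ∀ x y : Q, x * y = y * x := by
    intro x y
    induction x using QuotientGroup.induction_on with | H a =>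
    induction y using QuotientGroup.induction_on with | H a' =>
    show ((QuotientGroup.mk (a * a') : Q)) = QuotientGroup.mk (a' * a)
    rw [hAcomm]
  -- `Q` is finite
  haveI : AddGroup.FG (ℤ × ℤ) := Module.Finite.iff_addGroup_fg.mp inferInstance
  haveI : Group.FG A :=
    Group.fg_of_surjective (f := e.symm.toMonoidHom) e.symm.surjective
  haveI : Group.FG Q :=
    Group.fg_of_surjective (f := QuotientGroup.mk' Γ) (QuotientGroup.mk'_surjective Γ)
  -- exponent of `Q`
  have hexpQ : ∀ x : Q, x ^ (p ^ (k + 1)) = 1 := by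
    intro x
    induction x using QuotientGroup.induction_on with | H a =>
    have : ((QuotientGroup.mk a : Q)) ^ (p ^ (k + 1)) = QuotientGroup.mk (a ^ (p ^ (k + 1))) :=
      rfl
    rw [this, QuotientGroup.eq_one_iff]
    have : ((a : B)) ^ (p ^ (k + 1)) ∈ powSubgroup A (p ^ (k + 1)) :=
      Subgroup.subset_closure ⟨(a : B), a.2, rfl⟩
    have hmem : ((a : B)) ^ (p ^ (k + 1)) ∈ gammaSeries p A k :=
      powSubgroup_pow_le p A k this
    rw [hΓdef, Subgroup.mem_subgroupOf]
    simpa using hmem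
  have hQfin : Finite Q := by
    letI : CommGroup Q := { (inferInstance : Group Q) with mul_comm := hQcomm }
    exact CommGroup.finite_of_fg_torsion Q (fun x =>
      isOfFinOrder_iff_pow_eq_one.2 ⟨p ^ (k + 1), pow_pos hp.pos _, hexpQ x⟩)
  haveI := hQfin
  -- the key nilpotency computation
  letI : CommGroup Q := { (inferInstance : Group Q) with mul_comm := hQcomm }
  have key : ∀ b : B, (θ b) ^ (p ^ (2 * k + 1)) = 1 := by
    intro b
    -- the endomorphism of `Additive Q` induced by `θ b`
    set u : AddMonoid.End (Additive Q) :=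
      AddMonoidHom.mk' (fun y => Additive.ofMul (θ b y.toMul))
        (fun y z => by simp [map_mul]) with hudef
    set n : AddMonoid.End (Additive Q) := u - 1 with hndef
    have hu : u = n + 1 := eq_add_of_sub_eq hndef.symm
    have hn_apply : ∀ y : Additive Q,
        ((n y).toMul : Q) = θ b y.toMul * (y.toMul)⁻¹ := by
      intro y
      rw [hndef]
      show Additive.toMul (u y - (1 : AddMonoid.End (Additive Q)) y) = _
      rw [toMul_sub, div_eq_mul_inv]
      rfl
    -- the stepping lemma: the chain is stabilized
    have hstep : ∀ (i : ℕ) (z : Q),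
        (∃ a : A, (↑a : B) ∈ gchain p A i ∧ QuotientGroup.mk a = z) →
        ∃ a' : A, (↑a' : B) ∈ gchain p A (i + 1) ∧
          QuotientGroup.mk a' = θ b z * z⁻¹ := by
      rintro i z ⟨a, ha, rfl⟩
      have hmem : ⁅b, (↑a : B)⁆ ∈ gchain p A (i + 1) :=
        commutator_gchain_le p A i
          (Subgroup.commutator_mem_commutator (Subgroup.mem_top b) ha)
      have hmemA : ⁅b, (↑a : B)⁆ ∈ A := gchain_le p A hA (i + 1) hmem
      refine ⟨⟨⁅b, (↑a : B)⁆, hmemA⟩, hmem, ?_⟩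
      rw [hθ b a]
      have h1 : (⟨⁅b, (↑a : B)⁆, hmemA⟩ : A) =
          (⟨b * ↑a * b⁻¹, hA.conj_mem ↑a a.2 b⟩ : A) * a⁻¹ := by
        ext
        simp [commutatorElement_def, mul_assoc]
      rw [h1]
      rfl
    -- iterating: `n^j` lands in level `j` of the chain
    have hiter : ∀ (j : ℕ) (y : Additive Q),
        ∃ a : A, (↑a : B) ∈ gchain p A j ∧
          QuotientGroup.mk a = ((n ^ j) y).toMul := by
      intro j
      induction j with
      | zero =>
        intro y
        obtain ⟨a, ha⟩ := QuotientGroup.mk_surjective (y.toMul : Q)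
        exact ⟨a, a.2, by simpa using ha⟩
      | succ j ih =>
        intro y
        obtain ⟨a, ha, hmk⟩ := ih y
        obtain ⟨a', ha', hmk'⟩ := hstep j (((n ^ j) y).toMul) ⟨a, ha, hmk⟩
        refine ⟨a', ha', ?_⟩
        have : (n ^ (j + 1)) y = n ((n ^ j) y) := by
          rw [pow_succ']; rfl
        rw [this, hn_apply]
        exact hmk'
    have hnil : ∀ y : Additive Q, (n ^ (k + 1)) y = 0 := by
      intro y
      obtain ⟨a, ha, hmk⟩ := hiter (k + 1) y
      have haΓ : a ∈ Γ := by rw [hΓdef, Subgroup.mem_subgroupOf]; exact ha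
      have h1 : ((QuotientGroup.mk a : Q)) = 1 := (QuotientGroup.eq_one_iff a).2 haΓ
      have : (((n ^ (k + 1)) y).toMul : Q) = 1 := by rw [← hmk, h1]
      exact Additive.toMul.injective (by simpa using this)
    have hexp0 : ∀ y : Additive Q, (p ^ (k + 1)) • y = 0 := by
      intro y
      apply Additive.toMul.injective
      rw [toMul_nsmul]
      exact hexpQ _
    -- the main computation in the endomorphism ring
    have hN : ∀ y : Additive Q, (u ^ (p ^ (2 * k + 1))) y = y := by
      intro y
      rw [hu, (Commute.one_right n).add_pow, stmt8.end_sum_apply]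
      rw [Finset.sum_eq_single_of_mem 0 (Finset.mem_range.2 (Nat.succ_pos _))]
      · simp
      · intro i _ hne
        simp only [one_pow, mul_one]
        have happ : (n ^ i * ((p ^ (2 * k + 1)).choose i : AddMonoid.End (Additive Q))) y
            = (n ^ i) (((p ^ (2 * k + 1)).choose i) • y) := rfl
        rw [happ]
        rcases le_or_gt i k with hik | hik
        · obtain ⟨t, ht⟩ := stmt8.dvd_aux hp k i hne hik
          rw [ht, mul_smul, map_nsmul, map_nsmul, hexp0]
        · have hz : (n ^ i) y = 0 := by
            have hdecomp : n ^ i = n ^ (i - (k + 1)) * n ^ (k + 1) := by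
              rw [← pow_add]
              congr 1
              omega
            have h2 : (n ^ (i - (k + 1)) * n ^ (k + 1)) y
                = (n ^ (i - (k + 1))) ((n ^ (k + 1)) y) := rfl
            rw [hdecomp, h2, hnil, map_zero]
          rw [map_nsmul, hz, smul_zero]
    -- transfer back to `MulAut`
    have hbridge : ∀ (m : ℕ) (x : Q),
        ((θ b) ^ m) x = ((u ^ m) (Additive.ofMul x)).toMul := by
      intro m
      induction m with
      | zero => intro x; simp
      | succ m ih =>
        intro x
        rw [pow_succ, MulAut.mul_apply, ih, pow_succ]
        rfl
    ext x
    rw [hbridge, hN]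
    rfl
  constructor
  · exact Finite.of_injective
      (fun g => ((g : MulAut Q) : Q → Q))
      (fun g h hgh => Subtype.ext (by
        apply MulEquiv.ext
        intro x
        exact congrFun hgh x))
  · intro g
    obtain ⟨b, hb⟩ := g.2
    refine ⟨2 * k + 1, ?_⟩
    apply Subtype.ext
    have : ((g : MulAut Q)) ^ (p ^ (2 * k + 1)) = 1 := by
      rw [← hb]; exact key b
    simpa using this
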